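/- Let h ∈ (0,1). For every ε ∈ (0, 1/2) there exist constants C₁ > 0, C₂ > 0 and λ̄ ∈ (0,1), depending only on ε and h, such that for all λ ∈ (0, λ̄], all r ∈ ℝ and all r₀ ∈ [ε, 1−ε], one has |F_λ'(r)| ≤ C₁·F_λ'(r)·(r − r₀) + C₂. -/

import Mathlib

/-- Convex singular part `F_{1,λ}` of the regularized Lennard--Jones potential. -/
noncomputable def F1reg (h l r : ℝ) : ℝ :=
  if r < 0 then -r^3/l + h/2 * r^2 + h*r
  else if r < 1 - l then -h * Real.log (1 - r)
  else -h * Real.log l + 3*h/2 - 2*h/l * (1 - r) + h/(2*l^2) * (1 - r)^2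

/-- Non-convex regular part `F̄₂` of the regularized Lennard--Jones potential. -/
noncomputable def F2reg (h r : ℝ) : ℝ :=
  if r < 1 then -r^3/3 - h*(r^2/2 + r)
  else -1/3 - 3*h/2 - (1 + 2*h)*(r - 1) - (2 + h)/2 * (r - 1)^2

/-- The regularized potential `F_λ = F_{1,λ} + F̄₂`. -/
noncomputable def Freg (h l r : ℝ) : ℝ := F1reg h l r + F2reg h r

/-- Derivative of `F1reg`. -/
noncomputable def G1 (h l r : ℝ) : ℝ :=
  if r < 0 then -3*r^2/l + h*r + h
  else if r < 1 - l then h/(1-r)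
  else 2*h/l - h/l^2*(1-r)

/-- Derivative of `F2reg`. -/
noncomputable def G2 (h r : ℝ) : ℝ :=
  if r < 1 then -r^2 - h*(r+1) else -(1+2*h) - (2+h)*(r-1)

lemma hasDerivAt_ite (c x d : ℝ) {f g : ℝ → ℝ}
    (hf : x ≤ c → HasDerivAt f d x) (hg : c ≤ x → HasDerivAt g d x)
    (hfg : x = c → f x = g x) :
    HasDerivAt (fun r => if r < c then f r else g r) d x := by
  rcases lt_trichotomy x c with hlt | heq | hgt
  · apply (hf hlt.le).congr_of_eventuallyEq
    filter_upwards [Iio_mem_nhds hlt] with r hr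
    rw [if_pos (Set.mem_Iio.mp hr)]
  · subst heq
    have h1 : HasDerivWithinAt (fun r => if r < x then f r else g r) d (Set.Iic x) x := by
      refine ((hf le_rfl).hasDerivWithinAt).congr ?_ (by simp [hfg rfl])
      intro y hy
      rcases lt_or_eq_of_le (Set.mem_Iic.mp hy) with h' | h'
      · rw [if_pos h']
      · subst h'; simp [hfg rfl]
    have h2 : HasDerivWithinAt (fun r => if r < x then f r else g r) d (Set.Ici x) x := by
      refine ((hg le_rfl).hasDerivWithinAt).congr ?_ (by simp [hfg rfl])
      intro y hy
      rw [if_neg (not_lt.2 (Set.mem_Ici.mp hy))]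
    have h3 := h1.union h2
    rw [Set.Iic_union_Ici] at h3
    exact h3.hasDerivAt Filter.univ_mem
  · apply (hg hgt.le).congr_of_eventuallyEq
    filter_upwards [Ioi_mem_nhds hgt] with r hr
    rw [if_neg (not_lt.2 (le_of_lt (Set.mem_Ioi.mp hr)))]

lemma hasDerivAt_p1 (h l x : ℝ) :
    HasDerivAt (fun r : ℝ => -r^3/l + h/2 * r^2 + h*r) (-3*x^2/l + h*x + h) x := by
  have h1 : HasDerivAt (fun r : ℝ => -r^3/l + h/2 * r^2 + h*r)
      (-(↑(3:ℕ)*x^2)/l + h/2*(↑(2:ℕ)*x^1) + h*1) x := by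
    exact (((hasDerivAt_pow 3 x).neg.div_const l).add
      ((hasDerivAt_pow 2 x).const_mul (h/2))).add ((hasDerivAt_id x).const_mul h)
  convert h1 using 1
  push_cast
  ring

lemma hasDerivAt_plog (h x : ℝ) (hx : x < 1) :
    HasDerivAt (fun r : ℝ => -h * Real.log (1 - r)) (h/(1-x)) x := by
  have h0 : (1:ℝ) - x ≠ 0 := by intro hc; linarith [hc]
  have h1 : HasDerivAt (fun r : ℝ => 1 - r) (-1 : ℝ) x := by
    simpa using (hasDerivAt_id x).const_sub 1
  have h2 : HasDerivAt (fun r : ℝ => Real.log (1 - r)) ((1-x)⁻¹ * (-1)) x :=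
    (Real.hasDerivAt_log h0).comp x h1
  have h3 := h2.const_mul (-h)
  refine HasDerivAt.congr_deriv h3 ?_
  ring

lemma hasDerivAt_p3 (h l x : ℝ) :
    HasDerivAt (fun r : ℝ => -h * Real.log l + 3*h/2 - 2*h/l * (1 - r) + h/(2*l^2) * (1 - r)^2)
      (2*h/l - h/l^2*(1-x)) x := by
  have h1 : HasDerivAt (fun r : ℝ => 1 - r) (-1 : ℝ) x := by
    simpa using (hasDerivAt_id x).const_sub 1
  have h2 : HasDerivAt (fun r : ℝ => (1 - r)^2) (↑(2:ℕ)*(1-x)^1*(-1)) x := h1.pow 2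
  have h3 := ((h1.const_mul (2*h/l)).const_sub (-h * Real.log l + 3*h/2)).add
      (h2.const_mul (h/(2*l^2)))
  have he : (fun r : ℝ => -h * Real.log l + 3*h/2 - 2*h/l * (1 - r) + h/(2*l^2) * (1 - r)^2)
      = (fun r : ℝ => (-h * Real.log l + 3*h/2 - 2*h/l * (1 - r)) + h/(2*l^2) * (1 - r)^2) := by
    funext r; ring
  rw [he]
  refine HasDerivAt.congr_deriv h3 ?_
  push_cast
  ring

lemma hasDerivAt_q1 (h x : ℝ) :
    HasDerivAt (fun r : ℝ => -r^3/3 - h*(r^2/2 + r)) (-x^2 - h*(x+1)) x := by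
  have h1 : HasDerivAt (fun r : ℝ => -r^3/3 - h*(r^2/2 + r))
      (-(↑(3:ℕ)*x^2)/3 - h*(↑(2:ℕ)*x^1/2 + 1)) x := by
    refine ((hasDerivAt_pow 3 x).neg.div_const 3).sub ?_
    exact (((hasDerivAt_pow 2 x).div_const 2).add (hasDerivAt_id x)).const_mul h
  convert h1 using 1
  push_cast
  ring

lemma hasDerivAt_q2 (h x : ℝ) :
    HasDerivAt (fun r : ℝ => -1/3 - 3*h/2 - (1 + 2*h)*(r - 1) - (2 + h)/2 * (r - 1)^2)
      (-(1+2*h) - (2+h)*(x-1)) x := by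
  have h1 : HasDerivAt (fun r : ℝ => r - 1) (1 : ℝ) x := (hasDerivAt_id x).sub_const 1
  have h2 : HasDerivAt (fun r : ℝ => (r - 1)^2) (↑(2:ℕ)*(x-1)^1*1) x := h1.pow 2
  have h3 := (((h1.const_mul (1+2*h)).const_sub (-1/3 - 3*h/2))).sub
      (h2.const_mul ((2+h)/2))
  have he : (fun r : ℝ => -1/3 - 3*h/2 - (1 + 2*h)*(r - 1) - (2 + h)/2 * (r - 1)^2)
      = (fun r : ℝ => (-1/3 - 3*h/2 - (1 + 2*h)*(r - 1)) - (2 + h)/2 * (r - 1)^2) := by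
    funext r; ring
  rw [he]
  refine HasDerivAt.congr_deriv h3 ?_
  push_cast
  ring

lemma hasDerivAt_F1reg (h l : ℝ) (hl : 0 < l) (hl1 : l < 1) (x : ℝ) :
    HasDerivAt (F1reg h l) (G1 h l x) x := by
  have hl0 : l ≠ 0 := ne_of_gt hl
  unfold F1reg
  refine hasDerivAt_ite 0 x (G1 h l x)
    (f := fun r => -r^3/l + h/2 * r^2 + h*r)
    (g := fun r => if r < 1 - l then -h * Real.log (1 - r)
      else -h * Real.log l + 3*h/2 - 2*h/l * (1 - r) + h/(2*l^2) * (1 - r)^2) ?_ ?_ ?_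
  · intro hx
    have e : G1 h l x = -3*x^2/l + h*x + h := by
      rcases lt_or_eq_of_le hx with h' | h'
      · simp [G1, h']
      · subst h'
        norm_num [G1, show (0:ℝ) < 1 - l by linarith]
    rw [e]; exact hasDerivAt_p1 h l x
  · intro hx
    refine hasDerivAt_ite (1-l) x (G1 h l x) ?_ ?_ ?_
    · intro hx2
      have hx1 : x < 1 := by linarith
      have e : G1 h l x = h/(1-x) := by
        rcases lt_or_eq_of_le hx2 with h' | h'
        · simp [G1, not_lt.2 hx, h']
        · subst h'
          have h1 : ¬ ((1:ℝ) - l < 0) := by push_neg; linarith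
          have h2 : ¬ ((1:ℝ) - l < 1 - l) := lt_irrefl _
          rw [G1, if_neg h1, if_neg h2]
          field_simp
          rw [show (1:ℝ) - (1 - l) = l by ring, pow_two, mul_div_assoc, mul_div_cancel_right₀ _ hl0]
          ring
      rw [e]; exact hasDerivAt_plog h x hx1
    · intro hx2
      have e : G1 h l x = 2*h/l - h/l^2*(1-x) := by
        have h1 : ¬ x < 1 - l := not_lt.2 hx2
        have h2 : ¬ x < 0 := not_lt.2 (by linarith)
        rw [G1, if_neg h2, if_neg h1]
      rw [e]; exact hasDerivAt_p3 h l x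
    · intro hx2
      rw [hx2]
      have e : (1:ℝ) - (1 - l) = l := by ring
      rw [e]
      field_simp
      ring
  · intro hx
    rw [hx]
    norm_num [show (0:ℝ) < 1 - l by linarith]

lemma hasDerivAt_F2reg (h : ℝ) (x : ℝ) :
    HasDerivAt (F2reg h) (G2 h x) x := by
  unfold F2reg
  refine hasDerivAt_ite 1 x (G2 h x)
    (f := fun r => -r^3/3 - h*(r^2/2 + r))
    (g := fun r => -1/3 - 3*h/2 - (1 + 2*h)*(r - 1) - (2 + h)/2 * (r - 1)^2) ?_ ?_ ?_
  · intro hx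
    have e : G2 h x = -x^2 - h*(x+1) := by
      rcases lt_or_eq_of_le hx with h' | h'
      · simp [G2, h']
      · subst h'
        norm_num [G2]
        try ring
    rw [e]; exact hasDerivAt_q1 h x
  · intro hx
    have e : G2 h x = -(1+2*h) - (2+h)*(x-1) := by
      rcases lt_or_eq_of_le hx with h' | h'
      · simp [G2, not_lt.2 h'.le]
      · subst h'
        norm_num [G2]
        try ring
    rw [e]; exact hasDerivAt_q2 h x
  · intro hx
    rw [hx]
    norm_num
    try ring

lemma deriv_Freg (h l : ℝ) (hl : 0 < l) (hl1 : l < 1) (x : ℝ) :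
    deriv (Freg h l) x = G1 h l x + G2 h x :=
  ((hasDerivAt_F1reg h l hl hl1 x).add (hasDerivAt_F2reg h x)).deriv

set_option maxHeartbeats 2000000 in
/-- Miranville--Zelik-type inequality for the regularized potential: for every
`ε ∈ (0,1/2)` there are `C₁, C₂ > 0` and `λ̄ ∈ (0,1)`, depending only on `ε` and `h`,
such that `|F_λ'(r)| ≤ C₁ F_λ'(r)(r - r₀) + C₂` for all `λ ∈ (0,λ̄]`, `r ∈ ℝ`,
`r₀ ∈ [ε, 1-ε]`. -/
theorem Freg_MZ_inequality (h : ℝ) (hh : h ∈ Set.Ioo (0:ℝ) 1)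
    (ε : ℝ) (hε : ε ∈ Set.Ioo (0:ℝ) (1/2)) :
    ∃ C₁ > (0:ℝ), ∃ C₂ > (0:ℝ), ∃ lb ∈ Set.Ioo (0:ℝ) 1,
      ∀ l ∈ Set.Ioc (0:ℝ) lb, ∀ r : ℝ, ∀ r₀ ∈ Set.Icc ε (1 - ε),
        |deriv (Freg h l) r| ≤ C₁ * (deriv (Freg h l) r * (r - r₀)) + C₂ := by
  obtain ⟨hh0, hh1⟩ := hh
  obtain ⟨hε0, hε2⟩ := hε
  have h2h : (0:ℝ) < 2 + h := by linarith
  obtain ⟨δ, hδdef⟩ : ∃ δ : ℝ, δ = min (ε/2) (h/(2+h)) := ⟨_, rfl⟩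
  have hd : 0 < δ := hδdef ▸ lt_min (by linarith) (div_pos hh0 h2h)
  have hδε : δ ≤ ε/2 := hδdef ▸ min_le_left _ _
  have hδh : δ ≤ h/(2+h) := hδdef ▸ min_le_right _ _
  have hδ1 : δ < 1 := by
    have : ε/2 < 1 := by linarith
    linarith [hδε]
  have hdh2 : (2+h)*δ ≤ h := by
    have := (le_div_iff₀ h2h).mp hδh
    linarith
  clear hδdef hδh
  obtain ⟨K, hK⟩ : ∃ K : ℝ, K = h/δ := ⟨_, rfl⟩
  have hhδ : 2 + h ≤ K := hK ▸ (le_div_iff₀ hd).mpr (by nlinarith)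
  have hK0 : 0 < K := lt_of_lt_of_le h2h hhδ
  have hc1 : (0:ℝ) < 2/ε := div_pos (by norm_num) hε0
  have hM0 : (0:ℝ) < K + 1 + 2*h := by linarith
  have hC2 : (0:ℝ) < 3*(2/ε)*(K + 1 + 2*h) + (K + 1 + 2*h) := by nlinarith
  refine ⟨2/ε, hc1, 3*(2/ε)*(K + 1 + 2*h) + (K + 1 + 2*h), hC2, δ, ⟨hd, hδ1⟩, ?_⟩
  rintro l ⟨hl0, hlδ⟩ r r₀ ⟨hr₀1, hr₀2⟩
  have hl1 : l < 1 := lt_of_le_of_lt hlδ hδ1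
  rw [deriv_Freg h l hl0 hl1 r]
  have hAl : (2+h)*l ≤ h := by nlinarith
  by_cases hr0 : r < 0
  · -- Region 1 : r < 0
    have e1 : G1 h l r = -3*r^2/l + h*r + h := by rw [G1, if_pos hr0]
    have e2 : G2 h r = -r^2 - h*(r+1) := by rw [G2, if_pos (by linarith)]
    rw [e1, e2]
    have eF : -3*r^2/l + h*r + h + (-r^2 - h*(r+1)) = -(3*r^2/l + r^2) := by ring
    rw [eF]
    have hq : 0 ≤ 3*r^2/l + r^2 := by positivity
    rw [abs_neg, abs_of_nonneg hq]
    have h4 : ε ≤ r₀ - r := by linarith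
    have h5 : (3*r^2/l + r^2)*ε ≤ (3*r^2/l + r^2)*(r₀ - r) :=
      mul_le_mul_of_nonneg_left h4 hq
    have h7 : (2/ε)*((3*r^2/l + r^2)*ε) ≤ (2/ε)*((3*r^2/l + r^2)*(r₀ - r)) :=
      mul_le_mul_of_nonneg_left h5 hc1.le
    have h6 : (2/ε)*((3*r^2/l + r^2)*ε) = 2*(3*r^2/l + r^2) := by
      field_simp
    have h8 : -(3*r^2/l + r^2) * (r - r₀) = (3*r^2/l + r^2)*(r₀ - r) := by ring
    rw [h8]
    linarith
  · push_neg at hr0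
    by_cases hr1 : r < 1 - δ
    · -- Region 2 : 0 ≤ r < 1 - δ  (bounded region)
      have hrl : r < 1 - l := by linarith
      have e1 : G1 h l r = h/(1-r) := by
        rw [G1, if_neg (not_lt.2 hr0), if_pos hrl]
      have e2 : G2 h r = -r^2 - h*(r+1) := by rw [G2, if_pos (by linarith)]
      rw [e1, e2]
      have h1r : δ ≤ 1 - r := by linarith
      have h1r0 : (0:ℝ) < 1 - r := by linarith
      have hA1 : h/(1-r) ≤ K := by
        rw [hK]; exact div_le_div_of_nonneg_left hh0.le hd h1r
      have hA0 : 0 < h/(1-r) := div_pos hh0 h1r0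
      have b1 : r^2 ≤ 1 := by nlinarith
      have b2 : h*r ≤ h := by nlinarith
      have b3 : 0 ≤ h*r := mul_nonneg hh0.le hr0
      have habs : |h/(1-r) + (-r^2 - h*(r+1))| ≤ K + 1 + 2*h := by
        rw [abs_le]
        constructor
        · linarith [hA0, b1, b2, hK0]
        · linarith [hA1, sq_nonneg r, b3, hh0]
      have hrr : |r - r₀| ≤ 1 := by
        rw [abs_le]
        constructor
        · linarith
        · linarith
      have hprod : -((K + 1 + 2*h)*1) ≤ (h/(1-r) + (-r^2 - h*(r+1)))*(r-r₀) := by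
        have hn := neg_abs_le ((h/(1-r) + (-r^2 - h*(r+1)))*(r-r₀))
        rw [abs_mul] at hn
        have h2' : |h/(1-r) + (-r^2 - h*(r+1))| * |r-r₀| ≤ (K + 1 + 2*h)*1 :=
          mul_le_mul habs hrr (abs_nonneg _) hM0.le
        linarith
      have h9 := mul_le_mul_of_nonneg_left hprod hc1.le
      have h10 : 0 ≤ (2/ε)*(K + 1 + 2*h) := by positivity
      linarith [h9, habs, h10]
    · -- Region 3 : r ≥ 1 - δ
      push_neg at hr1
      have hrpos : (0:ℝ) ≤ r := by linarith
      have hrr0 : ε/2 ≤ r - r₀ := by linarith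
      have hF : 0 ≤ G1 h l r + G2 h r := by
        by_cases hra : r < 1 - l
        · -- 1 - δ ≤ r < 1 - l
          have e1 : G1 h l r = h/(1-r) := by
            rw [G1, if_neg (not_lt.2 hrpos), if_pos hra]
          have e2 : G2 h r = -r^2 - h*(r+1) := by rw [G2, if_pos (by linarith)]
          rw [e1, e2]
          have h1r0 : (0:ℝ) < 1 - r := by linarith
          have h1r : 1 - r ≤ δ := by linarith
          have hB : K ≤ h/(1-r) := by
            rw [hK]; exact div_le_div_of_nonneg_left hh0.le h1r0 h1r
          have b1 : (0:ℝ) ≤ (1-r)*(1+r) := by nlinarith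
          have b2 : h*r ≤ h := by nlinarith
          nlinarith
        · -- r ≥ 1 - l
          push_neg at hra
          have e1 : G1 h l r = 2*h/l - h/l^2*(1-r) := by
            rw [G1, if_neg (not_lt.2 hrpos), if_neg (not_lt.2 hra)]
          have hl2 : (0:ℝ) < l^2 := by positivity
          by_cases hr2 : r < 1
          · -- 1 - l ≤ r < 1
            have e2 : G2 h r = -r^2 - h*(r+1) := by rw [G2, if_pos hr2]
            rw [e1, e2]
            have expand : (2*h/l - h/l^2*(1-r) + (-r^2 - h*(r+1))) * l^2
                = 2*h*l - h*(1-r) + (-r^2 - h*(r+1))*l^2 := by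
              field_simp
            have key : 0 ≤ (2*h/l - h/l^2*(1-r) + (-r^2 - h*(r+1))) * l^2 := by
              rw [expand]
              have hrl' : 1 - r ≤ l := by linarith
              have b1 : h*(1-r) ≤ h*l := mul_le_mul_of_nonneg_left hrl' hh0.le
              have binner : r^2 + h*(r+1) ≤ 1 + 2*h := by nlinarith
              have b2 : (r^2 + h*(r+1))*l^2 ≤ (1+2*h)*l^2 :=
                mul_le_mul_of_nonneg_right binner hl2.le
              have b3 : (1+2*h)*l^2 ≤ h*l := by
                nlinarith [mul_le_mul_of_nonneg_right hAl hl0.le,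
                  mul_le_mul_of_nonneg_right (show 1+2*h ≤ 2+h by linarith) (sq_nonneg l)]
              nlinarith
            by_contra hc
            push_neg at hc
            nlinarith
          · -- r ≥ 1
            push_neg at hr2
            have e2 : G2 h r = -(1+2*h) - (2+h)*(r-1) := by
              rw [G2, if_neg (not_lt.2 hr2)]
            rw [e1, e2]
            have expand : (2*h/l - h/l^2*(1-r) + (-(1+2*h) - (2+h)*(r-1))) * l^2
                = 2*h*l + h*(r-1) - (1+2*h)*l^2 - (2+h)*(r-1)*l^2 := by
              field_simp
              ring
            have key : 0 ≤ (2*h/l - h/l^2*(1-r) + (-(1+2*h) - (2+h)*(r-1))) * l^2 := by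
              rw [expand]
              have hB : (2+h)*l^2 ≤ h := by nlinarith
              have b1 : (2+h)*l^2*(r-1) ≤ h*(r-1) :=
                mul_le_mul_of_nonneg_right hB (by linarith)
              have b2 : (1+2*h)*l^2 ≤ h*l := by
                nlinarith [mul_le_mul_of_nonneg_right hAl hl0.le,
                  mul_le_mul_of_nonneg_right (show 1+2*h ≤ 2+h by linarith) (sq_nonneg l)]
              nlinarith [mul_nonneg hh0.le hl0.le]
            by_contra hc
            push_neg at hc
            nlinarith
      rw [abs_of_nonneg hF]
      have h5 : (G1 h l r + G2 h r)*(ε/2) ≤ (G1 h l r + G2 h r)*(r-r₀) :=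
        mul_le_mul_of_nonneg_left hrr0 hF
      have h7 := mul_le_mul_of_nonneg_left h5 hc1.le
      have h6 : (2/ε)*((G1 h l r + G2 h r)*(ε/2)) = G1 h l r + G2 h r := by
        field_simp
      linarith
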